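/- With Q = (1/√2)·[[1,0,0,i],[0,i,1,0],[0,i,−1,0],[1,0,0,−i]], for every pair U₁,U₂ ∈ SU(2) the matrix Q⁻¹ (U₁⊗U₂) Q is real orthogonal (an element of SO(4)). Moreover Q is unitary. -/
import Mathlib


open Matrix Kronecker Complex

noncomputable def sigma0 : Matrix (Fin 2) (Fin 2) ℂ := 1
noncomputable def sigma1 : Matrix (Fin 2) (Fin 2) ℂ := !![0, 1; 1, 0]
noncomputable def sigma2 : Matrix (Fin 2) (Fin 2) ℂ := !![0, -I; I, 0]
noncomputable def sigma3 : Matrix (Fin 2) (Fin 2) ℂ := !![1, 0; 0, -1]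

/-- Reindexing of a two-qubit matrix (indexed by `Fin 2 × Fin 2`) as a `4 × 4` matrix. -/
noncomputable def toF4 (M : Matrix (Fin 2 × Fin 2) (Fin 2 × Fin 2) ℂ) :
    Matrix (Fin 4) (Fin 4) ℂ :=
  Matrix.reindex finProdFinEquiv finProdFinEquiv M

/-- The magic-basis change matrix. -/
noncomputable def Qmagic : Matrix (Fin 4) (Fin 4) ℂ :=
  (((Real.sqrt 2)⁻¹ : ℝ) : ℂ) •
    !![1, 0, 0, I; 0, I, 1, 0; 0, I, -1, 0; 1, 0, 0, -I]

lemma toF4_kron (A B : Matrix (Fin 2) (Fin 2) ℂ) :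
    toF4 (A ⊗ₖ B) =
    !![A 0 0 * B 0 0, A 0 0 * B 0 1, A 0 1 * B 0 0, A 0 1 * B 0 1;
       A 0 0 * B 1 0, A 0 0 * B 1 1, A 0 1 * B 1 0, A 0 1 * B 1 1;
       A 1 0 * B 0 0, A 1 0 * B 0 1, A 1 1 * B 0 0, A 1 1 * B 0 1;
       A 1 0 * B 1 0, A 1 0 * B 1 1, A 1 1 * B 1 0, A 1 1 * B 1 1] := by
  ext i j
  fin_cases i <;> fin_cases j <;> rfl

lemma Qmagic_unitary : Qmagicᴴ * Qmagic = 1 := by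
  have h2 : (((Real.sqrt 2)⁻¹ : ℝ) : ℂ) * (((Real.sqrt 2)⁻¹ : ℝ) : ℂ) = 2⁻¹ := by
    rw [← Complex.ofReal_mul, ← mul_inv, Real.mul_self_sqrt (by norm_num)]
    norm_num
  ext i j
  fin_cases i <;> fin_cases j <;>
    simp [Qmagic, Matrix.mul_apply, Fin.sum_univ_four, Matrix.conjTranspose_apply,
      Matrix.smul_apply, _root_.map_mul, Complex.conj_ofReal, Complex.conj_I,
      Matrix.one_apply] <;>
    ring_nf <;> simp [h2, Complex.ext_iff, ← Complex.ofReal_pow, Real.sq_sqrt]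

/-- Entry relations for an `SU(2)` matrix. -/
lemma su2_entries (U : Matrix (Fin 2) (Fin 2) ℂ)
    (h : U ∈ Matrix.specialUnitaryGroup (Fin 2) ℂ) :
    U 1 1 = (starRingEnd ℂ) (U 0 0) ∧ U 1 0 = -(starRingEnd ℂ) (U 0 1) := by
  obtain ⟨hu, hd⟩ := Matrix.mem_specialUnitaryGroup_iff.mp h
  have hinv : U⁻¹ = Uᴴ := Matrix.inv_eq_left_inv (Matrix.mem_unitaryGroup_iff'.mp hu)
  have hadj : Uᴴ = U.adjugate := by
    rw [← hinv, Matrix.inv_def, hd]; simp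
  have h00 := congrFun (congrFun hadj 0) 0
  have h01 := congrFun (congrFun hadj 0) 1
  simp [Matrix.adjugate_fin_two, Matrix.conjTranspose_apply] at h00 h01
  refine ⟨h00.symm, ?_⟩
  have := congrArg (starRingEnd ℂ) h01
  simpa using this

lemma toF4_kron_unitary (U₁ U₂ : Matrix (Fin 2) (Fin 2) ℂ)
    (h1 : U₁ᴴ * U₁ = 1) (h2 : U₂ᴴ * U₂ = 1) :
    (toF4 (U₁ ⊗ₖ U₂))ᴴ * toF4 (U₁ ⊗ₖ U₂) = 1 := by
  have hK : (U₁ ⊗ₖ U₂)ᴴ * (U₁ ⊗ₖ U₂) = 1 := by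
    have hct : (U₁ ⊗ₖ U₂)ᴴ = (U₁ᴴ) ⊗ₖ (U₂ᴴ) := by
      ext ⟨i, j⟩ ⟨k, l⟩
      simp [Matrix.conjTranspose_apply, Matrix.kroneckerMap_apply]
    rw [hct, ← Matrix.mul_kronecker_mul, h1, h2, Matrix.one_kronecker_one]
  simp only [toF4, Matrix.reindex_apply, Matrix.conjTranspose_submatrix,
    Matrix.submatrix_mul_equiv, hK, Matrix.submatrix_one_equiv]

set_option maxHeartbeats 1600000 in
/-- `Q` is unitary and conjugation by `Q` maps local unitaries `U₁ ⊗ U₂`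
(`U₁, U₂ ∈ SU(2)`) into `SO(4)`. -/
theorem stmt10 :
    Qmagic ∈ Matrix.unitaryGroup (Fin 4) ℂ ∧
    ∀ U₁ U₂ : Matrix (Fin 2) (Fin 2) ℂ,
      U₁ ∈ Matrix.specialUnitaryGroup (Fin 2) ℂ →
      U₂ ∈ Matrix.specialUnitaryGroup (Fin 2) ℂ →
      ∃ R : Matrix (Fin 4) (Fin 4) ℝ,
        R ∈ Matrix.specialOrthogonalGroup (Fin 4) ℝ ∧
        Qmagic⁻¹ * toF4 (U₁ ⊗ₖ U₂) * Qmagic = R.map Complex.ofReal := by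
  have hQ := Qmagic_unitary
  have hQmem : Qmagic ∈ Matrix.unitaryGroup (Fin 4) ℂ :=
    Matrix.mem_unitaryGroup_iff'.mpr hQ
  have hQ' : Qmagic * Qmagicᴴ = 1 := mul_eq_one_comm.mp hQ
  have hQinv : Qmagic⁻¹ = Qmagicᴴ := Matrix.inv_eq_left_inv hQ
  refine ⟨hQmem, ?_⟩
  intro U₁ U₂ h₁ h₂
  obtain ⟨h₁u, h₁d⟩ := Matrix.mem_specialUnitaryGroup_iff.mp h₁
  obtain ⟨h₂u, h₂d⟩ := Matrix.mem_specialUnitaryGroup_iff.mp h₂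
  obtain ⟨g₁₁, g₁₀⟩ := su2_entries U₁ h₁
  obtain ⟨k₁₁, k₁₀⟩ := su2_entries U₂ h₂
  set X := toF4 (U₁ ⊗ₖ U₂) with hX
  set M := Qmagicᴴ * X * Qmagic with hM
  -- realness of entries
  have hconj : ∀ i j, (starRingEnd ℂ) (M i j) = M i j := by
    intro i j
    rw [hM, hX, toF4_kron, g₁₁, g₁₀, k₁₁, k₁₀]
    fin_cases i <;> fin_cases j <;>
    · simp [Qmagic, Matrix.mul_apply, Fin.sum_univ_four, Matrix.conjTranspose_apply,
        Matrix.smul_apply, _root_.map_mul, _root_.map_add,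
        map_neg, Complex.conj_ofReal, Complex.conj_I]
      ring
  set R : Matrix (Fin 4) (Fin 4) ℝ := Matrix.of (fun i j => (M i j).re) with hR
  have hRM : R.map Complex.ofReal = M := by
    ext i j
    simpa [Matrix.map_apply, hR] using Complex.conj_eq_iff_re.mp (hconj i j)
  -- unitarity of M
  have hXu : Xᴴ * X = 1 :=
    toF4_kron_unitary U₁ U₂ (Matrix.mem_unitaryGroup_iff'.mp h₁u)
      (Matrix.mem_unitaryGroup_iff'.mp h₂u)
  have hMu : Mᴴ * M = 1 := by
    have e : Mᴴ * M = Qmagicᴴ * (Xᴴ * ((Qmagic * Qmagicᴴ) * X)) * Qmagic := by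
      rw [hM]
      simp only [Matrix.conjTranspose_mul, Matrix.conjTranspose_conjTranspose,
        Matrix.mul_assoc]
    rw [e, hQ', Matrix.one_mul, hXu, Matrix.mul_one, hQ]
  -- determinant of M
  have hXd : X.det = 1 := by
    rw [hX]
    simp [toF4, Matrix.det_reindex_self, Matrix.det_kronecker, h₁d, h₂d]
  have hQd : Qmagicᴴ.det * Qmagic.det = 1 := by
    rw [← Matrix.det_mul, hQ, Matrix.det_one]
  have hMd : M.det = 1 := by
    rw [hM, Matrix.det_mul, Matrix.det_mul, hXd, mul_one, hQd]
  -- transfer to ℝ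
  have hRort : star R * R = 1 := by
    have hmap : (star R * R).map (Complex.ofRealHom : ℝ →+* ℂ) =
        (1 : Matrix (Fin 4) (Fin 4) ℝ).map (Complex.ofRealHom : ℝ →+* ℂ) := by
      rw [Matrix.map_mul]
      have hsR : (star R).map (Complex.ofRealHom : ℝ →+* ℂ) = Mᴴ := by
        ext i j
        have := congrFun (congrFun hRM j) i
        simp only [Matrix.map_apply] at this
        simp [Matrix.star_eq_conjTranspose, Matrix.conjTranspose_apply,
          Matrix.map_apply, ← this, Complex.conj_ofReal]
      have hRMh : R.map (Complex.ofRealHom : ℝ →+* ℂ) = M := hRM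
      rw [hsR, hRMh, hMu, Matrix.map_one _ (map_zero _) (map_one _)]
    ext i j
    have := congrFun (congrFun hmap i) j
    simp only [Matrix.map_apply] at this
    exact Complex.ofReal_inj.mp this
  have hRd : R.det = 1 := by
    have h : ((Complex.ofRealHom : ℝ →+* ℂ).mapMatrix R).det = 1 := by
      have hRM' : (Complex.ofRealHom : ℝ →+* ℂ).mapMatrix R = M := hRM
      rw [hRM', hMd]
    rw [← RingHom.map_det] at h
    exact Complex.ofReal_inj.mp h
  refine ⟨R, Matrix.mem_specialOrthogonalGroup_iff.mpr ⟨?_, hRd⟩, ?_⟩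
  · exact (Matrix.mem_orthogonalGroup_iff' (Fin 4) ℝ).mpr hRort
  · rw [hQinv, ← hM, hRM]
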